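/- For K ≥ 1 and t ∈ [0,1), log((1 + t^(1/K))/(1 - t^(1/K))) ≤ K·max{(log((1+t)/(1-t)))^(1/K), log((1+t)/(1-t))}. -/

import Mathlib

open Real

noncomputable def gg (z : ℝ) : ℝ :=
  Real.log (1 + Real.exp (-z)) - Real.log (1 - Real.exp (-z))

lemma exp_neg_lt_one {z : ℝ} (hz : 0 < z) : Real.exp (-z) < 1 := by
  rw [Real.exp_lt_one_iff]; linarith

lemma gg_pos {z : ℝ} (hz : 0 < z) : 0 < gg z := by
  have h1 : (0:ℝ) < Real.exp (-z) := Real.exp_pos _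
  have h2 : Real.exp (-z) < 1 := exp_neg_lt_one hz
  have : Real.log (1 - Real.exp (-z)) < Real.log (1 + Real.exp (-z)) :=
    Real.log_lt_log (by linarith) (by linarith)
  unfold gg; linarith

lemma gg_anti {z1 z2 : ℝ} (h1 : 0 < z1) (h12 : z1 ≤ z2) : gg z2 ≤ gg z1 := by
  have e2 : Real.exp (-z2) ≤ Real.exp (-z1) := Real.exp_le_exp.2 (by linarith)
  have p2 : (0:ℝ) < Real.exp (-z2) := Real.exp_pos _
  have l1 : Real.exp (-z1) < 1 := exp_neg_lt_one h1
  have hA : Real.log (1 + Real.exp (-z2)) ≤ Real.log (1 + Real.exp (-z1)) :=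
    Real.log_le_log (by linarith) (by linarith)
  have hB : Real.log (1 - Real.exp (-z1)) ≤ Real.log (1 - Real.exp (-z2)) :=
    Real.log_le_log (by linarith) (by linarith)
  unfold gg; linarith

/-- generic monotonicity-from-derivative helper -/
lemma flow_ge (f f' : ℝ → ℝ) (x1 x2 : ℝ) (h12 : x1 ≤ x2)
    (hd : ∀ x ∈ Set.Icc x1 x2, HasDerivAt f (f' x) x)
    (h0 : ∀ x ∈ Set.Ioo x1 x2, 0 ≤ f' x) : f x1 ≤ f x2 := by
  have hc : ContinuousOn f (Set.Icc x1 x2) := fun x hx =>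
    (hd x hx).continuousAt.continuousWithinAt
  have hdiff : DifferentiableOn ℝ f (interior (Set.Icc x1 x2)) := by
    rw [interior_Icc]
    exact fun x hx =>
      ((hd x (Set.Ioo_subset_Icc_self hx)).differentiableAt).differentiableWithinAt
  have hderiv : ∀ x ∈ interior (Set.Icc x1 x2), 0 ≤ deriv f x := by
    intro x hx
    rw [interior_Icc] at hx
    rw [(hd x (Set.Ioo_subset_Icc_self hx)).deriv]
    exact h0 x hx
  exact monotoneOn_of_deriv_nonneg (convex_Icc x1 x2) hc hdiff hderiv
    (Set.left_mem_Icc.2 h12) (Set.right_mem_Icc.2 h12) h12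

lemma hasDerivAt_gg {z : ℝ} (hz : 0 < z) :
    HasDerivAt gg (-(1 / Real.sinh z)) z := by
  have hy1 : (0:ℝ) < Real.exp (-z) := Real.exp_pos _
  have hy2 : Real.exp (-z) < 1 := exp_neg_lt_one hz
  have h1 : HasDerivAt (fun z : ℝ => Real.exp (-z)) (-Real.exp (-z)) z := by
    simpa [Function.comp_def] using (Real.hasDerivAt_exp (-z)).comp z (hasDerivAt_neg z)
  have h2 : HasDerivAt (fun z : ℝ => 1 + Real.exp (-z)) (-Real.exp (-z)) z :=
    h1.const_add 1
  have h3 : HasDerivAt (fun z : ℝ => 1 - Real.exp (-z)) (Real.exp (-z)) z := by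
    simpa using h1.const_sub 1
  have h4 : HasDerivAt (fun z : ℝ => Real.log (1 + Real.exp (-z)))
      (-Real.exp (-z) / (1 + Real.exp (-z))) z := h2.log (by linarith)
  have h5 : HasDerivAt (fun z : ℝ => Real.log (1 - Real.exp (-z)))
      (Real.exp (-z) / (1 - Real.exp (-z))) z := h3.log (by linarith)
  have h6 := h4.sub h5
  have hez : Real.exp z * Real.exp (-z) = 1 := by
    rw [← Real.exp_add]; simp
  have hE2 : Real.sinh z = (1 - Real.exp (-z) ^ 2) / (2 * Real.exp (-z)) := by
    rw [Real.sinh_eq]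
    field_simp
    nlinarith [hez]
  have heq : -Real.exp (-z) / (1 + Real.exp (-z)) - Real.exp (-z) / (1 - Real.exp (-z))
      = -(1 / Real.sinh z) := by
    rw [hE2]
    have d1 : 1 - Real.exp (-z) ≠ 0 := by linarith
    have d2 : 1 + Real.exp (-z) ≠ 0 := by linarith
    have d3 : 1 - Real.exp (-z) ^ 2 ≠ 0 := by nlinarith
    field_simp
    ring
  rw [heq] at h6
  exact h6

/-- 2y ≤ log(1+y) - log(1-y) for y ∈ [0,1) -/
lemma two_mul_le_artanh {y : ℝ} (h0 : 0 ≤ y) (h1 : y < 1) :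
    2 * y ≤ Real.log (1 + y) - Real.log (1 - y) := by
  have key := flow_ge (fun x : ℝ => Real.log (1 + x) - Real.log (1 - x) - 2 * x)
      (fun x : ℝ => 1 / (1 + x) + 1 / (1 - x) - 2) 0 y h0 ?_ ?_
  · simp only [add_zero, sub_zero, Real.log_one, mul_zero] at key
    linarith
  · intro x hx
    obtain ⟨hx0, hxy⟩ := hx
    have hx1 : x < 1 := lt_of_le_of_lt hxy h1
    have hA : HasDerivAt (fun x : ℝ => 1 + x) 1 x := by
      simpa using (hasDerivAt_id x).const_add 1
    have hB : HasDerivAt (fun x : ℝ => 1 - x) (-1) x := by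
      simpa using (hasDerivAt_id x).const_sub 1
    have h4 : HasDerivAt (fun x : ℝ => Real.log (1 + x)) (1 / (1 + x)) x := by
      simpa using hA.log (by linarith)
    have h5 : HasDerivAt (fun x : ℝ => Real.log (1 - x)) (-1 / (1 - x)) x :=
      hB.log (by linarith)
    have h6 := (h4.sub h5).sub ((hasDerivAt_id x).const_mul 2)
    refine h6.congr_deriv ?_
    field_simp
    ring
  · intro x hx
    obtain ⟨hx0, hxy⟩ := hx
    have hx1 : x < 1 := lt_trans hxy h1
    have hp1 : (0:ℝ) < 1 + x := by linarith
    have hp2 : (0:ℝ) < 1 - x := by linarith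
    have : (2:ℝ) ≤ 1 / (1 + x) + 1 / (1 - x) := by
      rw [div_add_div _ _ (ne_of_gt hp1) (ne_of_gt hp2), le_div_iff₀ (by positivity)]
      nlinarith
    linarith

lemma gg_ge {z : ℝ} (hz : 0 < z) : 2 * Real.exp (-z) ≤ gg z :=
  two_mul_le_artanh (le_of_lt (Real.exp_pos _)) (exp_neg_lt_one hz)

/-- sinh z * gg z is monotone on positives -/
lemma omega_mono {z1 z2 : ℝ} (h1 : 0 < z1) (h12 : z1 ≤ z2) :
    Real.sinh z1 * gg z1 ≤ Real.sinh z2 * gg z2 := by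
  have key := flow_ge (fun z : ℝ => Real.sinh z * gg z)
      (fun z : ℝ => Real.cosh z * gg z - 1) z1 z2 h12 ?_ ?_
  · exact key
  · intro z hz
    have hzpos : 0 < z := lt_of_lt_of_le h1 hz.1
    have hsp : 0 < Real.sinh z := Real.sinh_pos_iff.2 hzpos
    have h6 := (Real.hasDerivAt_sinh z).mul (hasDerivAt_gg hzpos)
    refine h6.congr_deriv ?_
    field_simp
    ring
  · intro z hz
    have hzpos : 0 < z := lt_trans h1 hz.1
    have hcp : 0 < Real.cosh z := Real.cosh_pos z
    have hg : 2 * Real.exp (-z) ≤ gg z := gg_ge hzpos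
    have hco : 1 ≤ Real.cosh z * (2 * Real.exp (-z)) := by
      rw [Real.cosh_eq]
      have e1 : Real.exp z * Real.exp (-z) = 1 := by rw [← Real.exp_add]; simp
      have e2 : (0:ℝ) < Real.exp (-z) := Real.exp_pos _
      nlinarith
    show (0:ℝ) ≤ Real.cosh z * gg z - 1
    nlinarith [mul_le_mul_of_nonneg_left hg (le_of_lt hcp)]

noncomputable def a0 : ℝ := Real.log ((Real.exp 1 + 1) / (Real.exp 1 - 1))

lemma exp_one_gt : (1:ℝ) < Real.exp 1 := by
  have := Real.add_one_le_exp (1:ℝ); linarith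

lemma a0_pos : 0 < a0 := by
  have h := exp_one_gt
  apply Real.log_pos
  rw [lt_div_iff₀ (by linarith)]
  linarith

lemma exp_neg_a0 : Real.exp (-a0) = (Real.exp 1 - 1) / (Real.exp 1 + 1) := by
  have h := exp_one_gt
  rw [Real.exp_neg, a0, Real.exp_log (div_pos (by linarith) (by linarith))]
  rw [inv_div]

lemma gg_a0 : gg a0 = 1 := by
  have h := exp_one_gt
  unfold gg
  rw [exp_neg_a0]
  have e1 : 1 + (Real.exp 1 - 1) / (Real.exp 1 + 1) = 2 * Real.exp 1 / (Real.exp 1 + 1) := by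
    field_simp; ring
  have e2 : 1 - (Real.exp 1 - 1) / (Real.exp 1 + 1) = 2 / (Real.exp 1 + 1) := by
    field_simp; ring
  rw [e1, e2, ← Real.log_div (by positivity) (by positivity)]
  have e3 : 2 * Real.exp 1 / (Real.exp 1 + 1) / (2 / (Real.exp 1 + 1)) = Real.exp 1 := by
    field_simp
  rw [e3, Real.log_exp]

lemma self_le_sinh {x : ℝ} (hx : 0 < x) : x ≤ Real.sinh x :=
  le_of_lt (Real.self_lt_sinh_iff.2 hx)

/-- derivative of κ ↦ gg (c/κ) -/
lemma hasDerivAt_gg_div {c κ : ℝ} (hc : 0 < c) (hκ : 0 < κ) :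
    HasDerivAt (fun κ : ℝ => gg (c / κ)) (c / (κ ^ 2 * Real.sinh (c / κ))) κ := by
  have hcκ : 0 < c / κ := by positivity
  have hsp : 0 < Real.sinh (c / κ) := Real.sinh_pos_iff.2 hcκ
  have hinv : HasDerivAt (fun κ : ℝ => c / κ) (-(c / κ ^ 2)) κ := by
    have := (hasDerivAt_inv (ne_of_gt hκ)).const_mul c
    simpa [div_eq_mul_inv, neg_mul, mul_comm] using this
  have h := (hasDerivAt_gg hcκ).comp κ hinv
  have h2 : -(1 / Real.sinh (c / κ)) * -(c / κ ^ 2) = c / (κ ^ 2 * Real.sinh (c / κ)) := by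
    rw [neg_mul_neg, div_mul_div_comm, one_mul, mul_comm (Real.sinh (c / κ)) (κ ^ 2)]
  rw [h2] at h
  simpa [Function.comp_def] using h

/-- boundary fact : gg (a0/κ) ≤ κ for κ ≥ 1 -/
lemma boundary {κ : ℝ} (hκ : 1 ≤ κ) : gg (a0 / κ) ≤ κ := by
  have ha0 := a0_pos
  have key := flow_ge (fun κ : ℝ => κ - gg (a0 / κ))
      (fun κ : ℝ => 1 - a0 / (κ ^ 2 * Real.sinh (a0 / κ))) 1 κ hκ ?_ ?_
  · simp only [div_one] at key
    rw [gg_a0] at key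
    linarith
  · intro x hx
    have hx0 : 0 < x := lt_of_lt_of_le one_pos hx.1
    simpa [Pi.sub_def] using (hasDerivAt_id x).sub (hasDerivAt_gg_div ha0 hx0)
  · intro x hx
    have hx1 : 1 < x := hx.1
    have hx0 : 0 < x := by linarith
    have hcx : 0 < a0 / x := by positivity
    have hs : a0 / x ≤ Real.sinh (a0 / x) := self_le_sinh hcx
    have hsp : 0 < Real.sinh (a0 / x) := Real.sinh_pos_iff.2 hcx
    have hle : a0 / (x ^ 2 * Real.sinh (a0 / x)) ≤ 1 := by
      rw [div_le_one (by positivity)]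
      have : x ^ 2 * (a0 / x) ≤ x ^ 2 * Real.sinh (a0 / x) :=
        mul_le_mul_of_nonneg_left hs (by positivity)
      have hxa : x ^ 2 * (a0 / x) = x * a0 := by field_simp
      nlinarith
    linarith

/-- case A : if 1 ≤ gg a then gg (a/K) ≤ K * gg a -/
lemma caseA {a K : ℝ} (ha : 0 < a) (hK : 1 ≤ K) (hL : 1 ≤ gg a) :
    gg (a / K) ≤ K * gg a := by
  have key := flow_ge (fun κ : ℝ => κ * gg a - gg (a / κ))
      (fun κ : ℝ => gg a - a / (κ ^ 2 * Real.sinh (a / κ))) 1 K hK ?_ ?_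
  · simp only [one_mul, div_one] at key
    linarith
  · intro x hx
    have hx0 : 0 < x := lt_of_lt_of_le one_pos hx.1
    simpa [Pi.sub_def] using ((hasDerivAt_id x).mul_const (gg a)).sub (hasDerivAt_gg_div ha hx0)
  · intro x hx
    have hx1 : 1 < x := hx.1
    have hx0 : 0 < x := by linarith
    have hcx : 0 < a / x := by positivity
    have hs : a / x ≤ Real.sinh (a / x) := self_le_sinh hcx
    have hsp : 0 < Real.sinh (a / x) := Real.sinh_pos_iff.2 hcx
    have hle : a / (x ^ 2 * Real.sinh (a / x)) ≤ 1 := by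
      rw [div_le_one (by positivity)]
      have : x ^ 2 * (a / x) ≤ x ^ 2 * Real.sinh (a / x) :=
        mul_le_mul_of_nonneg_left hs (by positivity)
      have hxa : x ^ 2 * (a / x) = x * a := by field_simp
      nlinarith
    linarith

/-- case B : if gg a ≤ 1 and a0 ≤ a then gg (a/K) ≤ K * (gg a) ^ (1/K) -/
lemma caseB {a K : ℝ} (hK : 1 ≤ K) (ha0a : a0 ≤ a) :
    gg (a / K) ≤ K * gg a ^ (1 / K) := by
  have ha0 := a0_pos
  have ha : 0 < a := lt_of_lt_of_le ha0 ha0a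
  have hK0 : (0:ℝ) < K := lt_of_lt_of_le one_pos hK
  have haK : 0 < a / K := by positivity
  have hga : 0 < gg a := gg_pos ha
  have hgaK : 0 < gg (a / K) := gg_pos haK
  -- flow of Θ(α) = log gg α - K * log gg (α/K) over [a0, a]
  have key := flow_ge (fun α : ℝ => Real.log (gg α) - K * Real.log (gg (α / K)))
      (fun α : ℝ => -(1 / (Real.sinh α * gg α)) + 1 / (Real.sinh (α / K) * gg (α / K)))
      a0 a ha0a ?_ ?_
  · -- conclude
    have hb : gg (a0 / K) ≤ K := boundary hK
    have hbpos : 0 < gg (a0 / K) := gg_pos (by positivity)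
    have hlogb : Real.log (gg (a0 / K)) ≤ Real.log K := Real.log_le_log hbpos hb
    simp only [gg_a0, Real.log_one] at key
    have h1 : K * Real.log (gg (a / K)) ≤ Real.log (gg a) + K * Real.log K := by
      nlinarith [mul_le_mul_of_nonneg_left hlogb (le_of_lt hK0)]
    have h2 : Real.log (gg (a / K)) ≤ Real.log K + Real.log (gg a) * (1 / K) := by
      rw [← mul_le_mul_iff_right₀ hK0]
      have hexp : K * (Real.log K + Real.log (gg a) * (1 / K)) =
          K * Real.log K + Real.log (gg a) := by
        field_simp
      rw [hexp]
      linarith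
    calc gg (a / K) = Real.exp (Real.log (gg (a / K))) := (Real.exp_log hgaK).symm
      _ ≤ Real.exp (Real.log K + Real.log (gg a) * (1 / K)) := Real.exp_le_exp.2 h2
      _ = K * gg a ^ (1 / K) := by
          rw [Real.exp_add, Real.exp_log hK0, Real.rpow_def_of_pos hga]
  · intro α hα
    have hαpos : 0 < α := lt_of_lt_of_le ha0 hα.1
    have hαK : 0 < α / K := by positivity
    have hgα : 0 < gg α := gg_pos hαpos
    have hgαK : 0 < gg (α / K) := gg_pos hαK
    have hs1 : 0 < Real.sinh α := Real.sinh_pos_iff.2 hαpos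
    have hs2 : 0 < Real.sinh (α / K) := Real.sinh_pos_iff.2 hαK
    have hd1 : HasDerivAt (fun α : ℝ => Real.log (gg α)) (-(1 / Real.sinh α) / gg α) α :=
      (hasDerivAt_gg hαpos).log (ne_of_gt hgα)
    have hinner : HasDerivAt (fun α : ℝ => α / K) (1 / K) α := by
      simpa using (hasDerivAt_id α).div_const K
    have hd2 : HasDerivAt (fun α : ℝ => gg (α / K)) (-(1 / Real.sinh (α / K)) * (1 / K)) α :=
      by have := (hasDerivAt_gg hαK).comp α hinner; exact this
    have hd3 : HasDerivAt (fun α : ℝ => Real.log (gg (α / K)))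
        (-(1 / Real.sinh (α / K)) * (1 / K) / gg (α / K)) α := hd2.log (ne_of_gt hgαK)
    have h6 := hd1.sub (hd3.const_mul K)
    refine h6.congr_deriv ?_
    field_simp
    ring
  · intro α hα
    have hαpos : 0 < α := lt_trans ha0 hα.1
    have hαK : 0 < α / K := by positivity
    have hgα : 0 < gg α := gg_pos hαpos
    have hgαK : 0 < gg (α / K) := gg_pos hαK
    have hs1 : 0 < Real.sinh α := Real.sinh_pos_iff.2 hαpos
    have hs2 : 0 < Real.sinh (α / K) := Real.sinh_pos_iff.2 hαK
    have hαKα : α / K ≤ α := by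
      rw [div_le_iff₀ hK0]
      nlinarith
    have hω : Real.sinh (α / K) * gg (α / K) ≤ Real.sinh α * gg α := omega_mono hαK hαKα
    have : 1 / (Real.sinh α * gg α) ≤ 1 / (Real.sinh (α / K) * gg (α / K)) :=
      one_div_le_one_div_of_le (by positivity) hω
    linarith

theorem stmt_10 (K t : ℝ) (hK : 1 ≤ K) (ht : t ∈ Set.Ico (0:ℝ) 1) :
    Real.log ((1 + t ^ (1 / K)) / (1 - t ^ (1 / K))) ≤
      K * max ((Real.log ((1 + t) / (1 - t))) ^ (1 / K))
              (Real.log ((1 + t) / (1 - t))) := by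
  obtain ⟨ht0, ht1⟩ := ht
  have hK0 : (0:ℝ) < K := lt_of_lt_of_le one_pos hK
  rcases eq_or_lt_of_le ht0 with h0 | h0
  · -- t = 0
    rw [← h0]
    rw [Real.zero_rpow (by positivity : (1:ℝ)/K ≠ 0)]
    norm_num
    have hz' : (0:ℝ) ^ (K⁻¹ : ℝ) = 0 := Real.zero_rpow (by positivity)
    rw [hz']
    simp
  -- t ∈ (0,1)
  set a := -Real.log t with ha
  have hapos : 0 < a := by
    have := Real.log_neg h0 ht1
    simp only [ha]; linarith
  have haK : 0 < a / K := by positivity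
  have hta : t = Real.exp (-a) := by
    rw [ha, neg_neg, Real.exp_log h0]
  have hrt : t ^ (1 / K) = Real.exp (-(a / K)) := by
    rw [Real.rpow_def_of_pos h0]
    congr 1
    simp only [ha]
    field_simp
  have lhs_eq : Real.log ((1 + t ^ (1 / K)) / (1 - t ^ (1 / K))) = gg (a / K) := by
    rw [hrt]
    have h1 : (0:ℝ) < 1 + Real.exp (-(a / K)) := by positivity
    have h2 : (0:ℝ) < 1 - Real.exp (-(a / K)) := by
      have := exp_neg_lt_one haK; linarith
    rw [Real.log_div (ne_of_gt h1) (ne_of_gt h2)]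
    rfl
  have L_eq : Real.log ((1 + t) / (1 - t)) = gg a := by
    rw [hta]
    have h1 : (0:ℝ) < 1 + Real.exp (-a) := by positivity
    have h2 : (0:ℝ) < 1 - Real.exp (-a) := by
      have := exp_neg_lt_one hapos; linarith
    rw [Real.log_div (ne_of_gt h1) (ne_of_gt h2)]
    rfl
  rw [lhs_eq, L_eq]
  rcases le_or_gt 1 (gg a) with hL | hL
  · -- case A
    have h1 : gg (a / K) ≤ K * gg a := caseA hapos hK hL
    have h2 : gg a ≤ max (gg a ^ (1 / K)) (gg a) := le_max_right _ _
    calc gg (a / K) ≤ K * gg a := h1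
      _ ≤ K * max (gg a ^ (1 / K)) (gg a) :=
          mul_le_mul_of_nonneg_left h2 (le_of_lt hK0)
  · -- case B
    have ha0a : a0 ≤ a := by
      by_contra hcon
      push_neg at hcon
      have := gg_anti hapos (le_of_lt hcon)
      rw [gg_a0] at this
      linarith
    have h1 : gg (a / K) ≤ K * gg a ^ (1 / K) := caseB hK ha0a
    have h2 : gg a ^ (1 / K) ≤ max (gg a ^ (1 / K)) (gg a) := le_max_left _ _
    calc gg (a / K) ≤ K * gg a ^ (1 / K) := h1
      _ ≤ K * max (gg a ^ (1 / K)) (gg a) :=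
          mul_le_mul_of_nonneg_left h2 (le_of_lt hK0)
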